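/- The value of the barrier-strategy value function at the optimal barrier is G(β₀* x₂, x₂; β₀*) = β₀* x₂ · (μ_A − μ_L)/(δ − μ_L) for every x₂ > 0. -/

import Mathlib

/-- The value function `G(x₁, x₂; β)` of the barrier strategy with barrier `β`
and ruin level `α₀`. -/
noncomputable def Gb (α₀ ζ₁ ζ₂ β x₁ x₂ : ℝ) : ℝ :=
  α₀ * x₂ * ((x₁ / (α₀ * x₂)) ^ ζ₁ - (x₁ / (α₀ * x₂)) ^ ζ₂) /
    (ζ₁ * (β / α₀) ^ (ζ₁ - 1) - ζ₂ * (β / α₀) ^ (ζ₂ - 1))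

/-- value of the barrier-strategy value function at the optimal
barrier: `G(β₀* x₂, x₂; β₀*) = β₀* x₂ (μ_A − μ_L)/(δ − μ_L)`. -/
theorem stmt_7 (μA μL δ σA σL ρ ζ₁ ζ₂ α₀ β₀ : ℝ)
    (hσA : 0 < σA) (hσL : 0 < σL) (hρ₁ : -1 < ρ) (hρ₂ : ρ < 1)
    (hμ : μL < μA) (hδ : μA < δ)
    (hroot₁ : (1 / 2) * (σA ^ 2 + σL ^ 2 - 2 * ρ * σA * σL) * ζ₁ * (ζ₁ - 1)
      + (μA - μL) * ζ₁ + (μL - δ) = 0)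
    (hroot₂ : (1 / 2) * (σA ^ 2 + σL ^ 2 - 2 * ρ * σA * σL) * ζ₂ * (ζ₂ - 1)
      + (μA - μL) * ζ₂ + (μL - δ) = 0)
    (hζlt : ζ₁ < ζ₂) (hζ₁ : ζ₁ < 0) (hζ₂ : 1 < ζ₂)
    (hα₀ : 0 < α₀)
    (hβ₀ : β₀ = α₀ * (ζ₁ * (ζ₁ - 1) / (ζ₂ * (ζ₂ - 1))) ^ (1 / (ζ₂ - ζ₁))) :
    ∀ x₂ : ℝ, 0 < x₂ →
      Gb α₀ ζ₁ ζ₂ β₀ (β₀ * x₂) x₂ = β₀ * x₂ * (μA - μL) / (δ - μL) := by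
  intro x₂ hx₂
  set s := σA ^ 2 + σL ^ 2 - 2 * ρ * σA * σL with hs_def
  clear_value s
  have hs : 0 < s := by nlinarith [sq_nonneg (σA - σL), mul_pos hσA hσL]
  have hζne : ζ₁ - ζ₂ ≠ 0 := by intro h; linarith [sub_eq_zero.mp h]
  have hne : ζ₂ - ζ₁ ≠ 0 := by intro h; linarith [sub_eq_zero.mp h]
  -- Vieta
  have hsum : s * (ζ₁ + ζ₂ - 1) = -2 * (μA - μL) := by
    have h : (ζ₁ - ζ₂) * ((1/2) * s * (ζ₁ + ζ₂ - 1) + (μA - μL)) = 0 := by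
      linear_combination hroot₁ - hroot₂
    have h2 := (mul_eq_zero.mp h).resolve_left hζne
    linear_combination 2 * h2
  have hprod : s * (ζ₁ * ζ₂) = 2 * (μL - δ) := by
    have h : (ζ₁ - ζ₂) * ((1/2) * s * (ζ₁ * ζ₂) - (μL - δ)) = 0 := by
      linear_combination ζ₂ * hroot₁ - ζ₁ * hroot₂
    have h2 := (mul_eq_zero.mp h).resolve_left hζne
    linear_combination 2 * h2
  have hq1 : 0 < ζ₁ * (ζ₁ - 1) := by nlinarith
  have hq2 : 0 < ζ₂ * (ζ₂ - 1) := by nlinarith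
  set c := ζ₁ * (ζ₁ - 1) / (ζ₂ * (ζ₂ - 1)) with hc_def
  have hc : 0 < c := div_pos hq1 hq2
  set r := c ^ (1 / (ζ₂ - ζ₁)) with hr_def
  have hr : 0 < r := Real.rpow_pos_of_pos hc _
  have hrc : r ^ (ζ₂ - ζ₁) = c := by
    rw [hr_def, ← Real.rpow_mul hc.le, one_div_mul_cancel hne, Real.rpow_one]
  have hβr : β₀ = α₀ * r := hβ₀
  have hx1 : β₀ * x₂ / (α₀ * x₂) = r := by
    rw [hβr]; field_simp
  have hx2 : β₀ / α₀ = r := by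
    rw [hβr]; field_simp
  have e1 : r ^ ζ₁ = r * r ^ (ζ₁ - 1) := by
    have h := Real.rpow_add hr 1 (ζ₁ - 1)
    rw [show (1:ℝ) + (ζ₁ - 1) = ζ₁ by ring, Real.rpow_one] at h
    exact h
  have e2 : r ^ ζ₂ = r * r ^ (ζ₂ - 1) := by
    have h := Real.rpow_add hr 1 (ζ₂ - 1)
    rw [show (1:ℝ) + (ζ₂ - 1) = ζ₂ by ring, Real.rpow_one] at h
    exact h
  have e3 : r ^ (ζ₂ - 1) = r ^ (ζ₁ - 1) * c := by
    have h := Real.rpow_add hr (ζ₁ - 1) (ζ₂ - ζ₁)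
    rw [show ζ₁ - 1 + (ζ₂ - ζ₁) = ζ₂ - 1 by ring, hrc] at h
    exact h
  set p := r ^ (ζ₁ - 1) with hp_def
  have hp : 0 < p := Real.rpow_pos_of_pos hr _
  clear_value p
  clear_value r
  clear_value c
  -- key algebraic identity
  have hkey : (1 - c) * (δ - μL) = (ζ₁ - ζ₂ * c) * (μA - μL) := by
    have h1 : c * (ζ₂ * (ζ₂ - 1)) = ζ₁ * (ζ₁ - 1) := by
      rw [hc_def]; field_simp [(sub_pos.mpr hζ₂).ne']
    apply mul_left_cancel₀ hs.ne'
    apply mul_left_cancel₀ hq2.ne'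
    linear_combination ((ζ₂ - ζ₁) * (δ - μL)) * hsum - ((ζ₂ - ζ₁) * (μA - μL)) * hprod
      + (s * (ζ₂ * (μA - μL) - (δ - μL))) * h1
  have hζ₂c : 0 < ζ₂ * c := mul_pos (by linarith) hc
  have hdc : ζ₁ - ζ₂ * c < 0 := by linarith
  have hden : ζ₁ * p - ζ₂ * (p * c) ≠ 0 := by
    have h : ζ₁ * p - ζ₂ * (p * c) = p * (ζ₁ - ζ₂ * c) := by ring
    rw [h]
    exact (mul_neg_of_pos_of_neg hp hdc).ne
  have hδμ : δ - μL ≠ 0 := by intro h; linarith [sub_eq_zero.mp h]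
  rw [Gb, hx1, hx2, e1, e2, e3]
  rw [← hp_def, div_eq_div_iff hden hδμ, hβr]
  linear_combination (α₀ * x₂ * r * p) * hkey
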